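/- With ρ as in the family ρ = Σ_{m,n} x_{mn} |m,n⟩⟨n,m| + Σ_k |k⟩⟨k| ⊗ (M_k on indices < k, N_k on indices > k), if ρ is positive semidefinite, then the set of negative eigenvalues of the partial transpose ρ^Γ (with multiplicity) equals the set of negative eigenvalues of the d_A × d_A matrix X = (x_{mn}). -/

import Mathlib

open Complex Matrix BigOperators
open scoped ComplexOrder
open Polynomial

noncomputable section

def PT {dA dB : ℕ} (ρ : Matrix (Fin dA × Fin dB) (Fin dA × Fin dB) ℂ) :
    Matrix (Fin dA × Fin dB) (Fin dA × Fin dB) ℂ :=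
  fun p q => ρ (p.1, q.2) (q.1, p.2)

def famState (dA dB : ℕ) (x : ℕ → ℕ → ℂ) (M N : ℕ → ℕ → ℕ → ℂ) :
    Matrix (Fin dA × Fin dB) (Fin dA × Fin dB) ℂ :=
  fun p q =>
    (if (p.2 : ℕ) = (q.1 : ℕ) ∧ (q.2 : ℕ) = (p.1 : ℕ) then x p.1 q.1 else 0) +
    (if p.1 = q.1 ∧ (p.2 : ℕ) < (p.1 : ℕ) ∧ (q.2 : ℕ) < (q.1 : ℕ) then M p.1 p.2 q.2 else 0) +
    (if p.1 = q.1 ∧ (p.1 : ℕ) < (p.2 : ℕ) ∧ (q.1 : ℕ) < (q.2 : ℕ) then N p.1 p.2 q.2 else 0)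



lemma charpoly_diagonal' {R : Type*} [CommRing R] {n : Type*} [Fintype n] [DecidableEq n]
    (d : n → R) : (Matrix.diagonal d).charpoly = ∏ i, (X - C (d i)) := by
  have h : charmatrix (Matrix.diagonal d) = Matrix.diagonal fun i => X - C (d i) := by
    ext i j
    by_cases hij : i = j
    · subst hij; simp
    · simp [charmatrix_apply_ne _ _ _ hij, Matrix.diagonal_apply_ne _ hij,
        Matrix.diagonal_apply_ne d hij]
  rw [Matrix.charpoly, h, Matrix.det_diagonal]

lemma charpoly_mul_conj' {R : Type*} [CommRing R] {n : Type*} [Fintype n] [DecidableEq n]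
    (U D V : Matrix n n R) (h : U * V = 1) : (U * D * V).charpoly = D.charpoly := by
  have hm : (U.map C) * (V.map C) = 1 := by
    rw [← Matrix.map_mul, h]
    simp
  have hcm : charmatrix (U * D * V) = (U.map C) * charmatrix D * (V.map C) := by
    simp only [charmatrix, RingHom.mapMatrix_apply]
    rw [Matrix.mul_sub, Matrix.sub_mul]
    congr 1
    · rw [← (Matrix.scalar_commute (X : R[X]) (fun r' => Commute.all _ _) (U.map C)).eq,
        Matrix.mul_assoc, hm, Matrix.mul_one]
    · simp [Matrix.map_mul, Matrix.mul_assoc]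
  rw [Matrix.charpoly, hcm, Matrix.det_mul, Matrix.det_mul, Matrix.charpoly]
  have h1 : (U.map C).det * (V.map C).det = 1 := by rw [← Matrix.det_mul, hm, Matrix.det_one]
  calc (U.map C).det * (charmatrix D).det * (V.map C).det
      = (charmatrix D).det * ((U.map C).det * (V.map C).det) := by ring
    _ = (charmatrix D).det := by rw [h1, mul_one]

lemma isHermitian_charpoly_eq_prod {𝕜 : Type*} [RCLike 𝕜] {n : Type*} [Fintype n] [DecidableEq n]
    {A : Matrix n n 𝕜} (hA : A.IsHermitian) :
    A.charpoly = ∏ i, (X - C ((hA.eigenvalues i : 𝕜))) := by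
  conv_lhs => rw [hA.spectral_theorem]
  rw [Unitary.conjStarAlgAut_apply, charpoly_mul_conj' _ _ _ ((Matrix.mem_unitaryGroup_iff).mp (hA.eigenvectorUnitary).2),
    charpoly_diagonal']
  rfl

lemma isHermitian_charpoly_eq_prodC {n : Type*} [Fintype n] [DecidableEq n]
    {A : Matrix n n ℂ} (hA : A.IsHermitian) :
    A.charpoly = ∏ i, (X - C ((hA.eigenvalues i : ℂ))) := by
  rw [isHermitian_charpoly_eq_prod hA]
  rfl

lemma roots_prod_eq {ι : Type*} [Fintype ι] (a : ι → ℂ) :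
    (∏ i, (X - C (a i))).roots = Finset.univ.val.map a := by
  have h : (∏ i, (X - C (a i))) = ((Finset.univ.val.map a).map (fun r => X - C r)).prod := by
    rw [Multiset.map_map, Finset.prod_eq_multiset_prod]
    rfl
  rw [h, Polynomial.roots_multiset_prod_X_sub_C]

/-- for a positive semidefinite state of the family, the multiset of
negative eigenvalues (with multiplicity) of the partial transpose `ρ^Γ` equals the
multiset of negative eigenvalues of the `d_A × d_A` matrix `X = (x_{mn})`. -/
theorem famState_negative_eigenvalues (dA dB : ℕ) (hd : dA ≤ dB)
    (x : ℕ → ℕ → ℂ) (M N : ℕ → ℕ → ℕ → ℂ)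
    (hρ : (famState dA dB x M N).PosSemidef)
    (hΓ : (PT (famState dA dB x M N)).IsHermitian)
    (hX : (Matrix.of fun m n : Fin dA => x m n).IsHermitian) :
    (Finset.univ.val.map hΓ.eigenvalues).filter (fun t => t < 0) =
      (Finset.univ.val.map hX.eigenvalues).filter (fun t => t < 0) := by
  classical
  set ρ := famState dA dB x M N with hρdef
  set A := PT ρ with hAdef
  set XM : Matrix (Fin dA) (Fin dA) ℂ := Matrix.of fun m n : Fin dA => x m n with hXM
  -- the set of "diagonal" indices
  set Dg : Fin dA × Fin dB → Prop := fun p => (p.2 : ℕ) = (p.1 : ℕ) with hDg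
  -- equivalence between diagonal indices and Fin dA
  have hmem : ∀ m : Fin dA, (m : ℕ) < dB := fun m => lt_of_lt_of_le m.2 hd
  let e1 : {p : Fin dA × Fin dB // Dg p} ≃ Fin dA :=
  { toFun := fun p => p.1.1
    invFun := fun m => ⟨(m, ⟨(m : ℕ), hmem m⟩), rfl⟩
    left_inv := fun p => by
      obtain ⟨⟨a, b⟩, hp⟩ := p
      apply Subtype.ext
      have hb : b = ⟨(a : ℕ), hmem a⟩ := Fin.ext hp
      subst hb
      rfl
    right_inv := fun m => rfl }
  let e : Fin dA ⊕ {p : Fin dA × Fin dB // ¬ Dg p} ≃ Fin dA × Fin dB :=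
    (Equiv.sumCongr e1.symm (Equiv.refl _)).trans (Equiv.sumCompl Dg)
  set B : Matrix {p : Fin dA × Fin dB // ¬ Dg p} {p : Fin dA × Fin dB // ¬ Dg p} ℂ :=
    A.submatrix (Subtype.val) (Subtype.val) with hBdef
  have he_inl : ∀ m : Fin dA, e (Sum.inl m) = (m, ⟨(m : ℕ), hmem m⟩) := fun m => by
    simp [e, e1]
  have he_inr : ∀ p, e (Sum.inr p) = p.1 := fun p => by simp [e]
  -- block structure
  have key : A.submatrix e e = Matrix.fromBlocks XM 0 0 B := by
    ext i j
    rcases i with m | p <;> rcases j with n | q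
    · simp only [Matrix.submatrix_apply, he_inl, Matrix.fromBlocks_apply₁₁]
      show ρ ((m, (⟨(n : ℕ), hmem n⟩ : Fin dB))) ((n, (⟨(m : ℕ), hmem m⟩ : Fin dB))) = XM m n
      simp only [hρdef, famState, hXM]
      rw [if_pos (by exact ⟨by trivial, by trivial⟩), if_neg, if_neg]
      · simp
      · rintro ⟨h1, h2, h3⟩
        have := congrArg Fin.val h1
        simp at h2 h3 this
        omega
      · rintro ⟨h1, h2, h3⟩
        have := congrArg Fin.val h1
        simp at h2 h3 this
        omega
    · simp only [Matrix.submatrix_apply, he_inl, he_inr, Matrix.fromBlocks_apply₁₂,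
        Matrix.zero_apply]
      show ρ ((m, q.1.2)) ((q.1.1, (⟨(m : ℕ), hmem m⟩ : Fin dB))) = 0
      have hq := q.2
      simp only [hDg] at hq
      simp only [hρdef, famState]
      rw [if_neg, if_neg, if_neg]
      · simp
      · rintro ⟨h1, h2, h3⟩
        have := congrArg Fin.val h1
        simp at h3 this
        omega
      · rintro ⟨h1, h2, h3⟩
        have := congrArg Fin.val h1
        omega
      · exact fun h => hq h.1
    · simp only [Matrix.submatrix_apply, he_inl, he_inr, Matrix.fromBlocks_apply₂₁,
        Matrix.zero_apply]
      show ρ ((p.1.1, (⟨(n : ℕ), hmem n⟩ : Fin dB))) ((n, p.1.2)) = 0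
      have hp := p.2
      simp only [hDg] at hp
      simp only [hρdef, famState]
      rw [if_neg, if_neg, if_neg]
      · simp
      · rintro ⟨h1, h2, h3⟩
        have := congrArg Fin.val h1
        simp at h2 this
        omega
      · rintro ⟨h1, h2, h3⟩
        have := congrArg Fin.val h1
        omega
      · exact fun h => hp h.2
    · simp only [Matrix.submatrix_apply, he_inr, Matrix.fromBlocks_apply₂₂]
      rfl
  -- positive semidefiniteness of B
  set ρ' : Matrix {p : Fin dA × Fin dB // ¬ Dg p} {p : Fin dA × Fin dB // ¬ Dg p} ℂ :=
    ρ.submatrix Subtype.val Subtype.val with hρ'def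
  have hρ'psd : ρ'.PosSemidef := hρ.submatrix _
  set Q : Fin dA → Matrix {p : Fin dA × Fin dB // ¬ Dg p} {p : Fin dA × Fin dB // ¬ Dg p} ℂ :=
    fun k => Matrix.diagonal (fun p => if p.1.1 = k then 1 else 0) with hQdef
  have hQH : ∀ k, (Q k)ᴴ = Q k := by
    intro k
    rw [hQdef]
    rw [Matrix.diagonal_conjTranspose]
    have hst : (star fun p : {p : Fin dA × Fin dB // ¬ Dg p} =>
        if p.1.1 = k then (1 : ℂ) else 0) =
        fun p : {p : Fin dA × Fin dB // ¬ Dg p} => if p.1.1 = k then (1 : ℂ) else 0 := by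
      funext p
      by_cases h : p.1.1 = k <;> simp [h, Pi.star_apply]
    rw [hst]
  set D := ∑ k : Fin dA, (Q k)ᴴ * ρ' * (Q k) with hDdef
  have hDpsd : D.PosSemidef :=
    Finset.sum_induction _ _ (fun a b ha hb => ha.add hb) Matrix.PosSemidef.zero
      (fun k _ => hρ'psd.conjTranspose_mul_mul_same (Q k))
  have hDentry : ∀ p q, D p q = if q.1.1 = p.1.1 then ρ' p q else 0 := by
    intro p q
    rw [hDdef]
    rw [Matrix.sum_apply]
    have hterm : ∀ k, ((Q k)ᴴ * ρ' * Q k) p q =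
        if p.1.1 = k then (if q.1.1 = k then ρ' p q else 0) else 0 := by
      intro k
      rw [hQH k, hQdef]
      rw [Matrix.mul_diagonal, Matrix.diagonal_mul]
      by_cases h1 : p.1.1 = k <;> by_cases h2 : q.1.1 = k <;> simp [h1, h2]
    rw [Finset.sum_congr rfl (fun k _ => hterm k)]
    by_cases h : q.1.1 = p.1.1
    · rw [if_pos h]
      rw [Finset.sum_eq_single p.1.1]
      · rw [if_pos rfl, if_pos h]
      · intro k _ hk
        rw [if_neg (fun hh => hk hh.symm)]
      · simp
    · rw [if_neg h]
      apply Finset.sum_eq_zero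
      intro k _
      by_cases h1 : p.1.1 = k
      · rw [if_pos h1, if_neg (fun hh => h (hh.trans h1.symm))]
      · rw [if_neg h1]
  have hBD : B = Dᵀ := by
    ext p q
    rw [Matrix.transpose_apply, hDentry q p]
    by_cases h : p.1.1 = q.1.1
    · rw [if_pos h]
      show ρ (p.1.1, q.1.2) (q.1.1, p.1.2) = ρ (q.1.1, q.1.2) (p.1.1, p.1.2)
      rw [h]
    · rw [if_neg h]
      show ρ (p.1.1, q.1.2) (q.1.1, p.1.2) = 0
      have hq := q.2
      simp only [hDg] at hq
      simp only [hρdef, famState]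
      rw [if_neg (fun hh => hq hh.1), if_neg (fun hh => h hh.1), if_neg (fun hh => h hh.1)]
      simp
  have hBpsd : B.PosSemidef := hBD ▸ hDpsd.transpose
  have hBH : B.IsHermitian := hBpsd.1
  -- characteristic polynomials
  have hchar : A.charpoly = XM.charpoly * B.charpoly := by
    have h1 : (Matrix.reindex e.symm e.symm A).charpoly = A.charpoly :=
      Matrix.charpoly_reindex _ _
    rw [← h1, Matrix.reindex_apply]
    simp only [Equiv.symm_symm]
    rw [key, Matrix.charpoly_fromBlocks_zero₂₁]
  have hprod : (∏ p, (X - C ((hΓ.eigenvalues p : ℂ)))) =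
      (∏ m, (X - C ((hX.eigenvalues m : ℂ)))) * ∏ j, (X - C ((hBH.eigenvalues j : ℂ))) := by
    rw [← isHermitian_charpoly_eq_prodC hΓ, ← isHermitian_charpoly_eq_prodC hX,
      ← isHermitian_charpoly_eq_prodC hBH, hchar]
  have hne1 : (∏ m, (X - C ((hX.eigenvalues m : ℂ)))) ≠ 0 :=
    (monic_prod_of_monic _ _ (fun i _ => monic_X_sub_C _)).ne_zero
  have hne2 : (∏ j, (X - C ((hBH.eigenvalues j : ℂ)))) ≠ 0 :=
    (monic_prod_of_monic _ _ (fun i _ => monic_X_sub_C _)).ne_zero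
  have h2 := congrArg Polynomial.roots hprod
  rw [Polynomial.roots_mul (mul_ne_zero hne1 hne2), roots_prod_eq, roots_prod_eq,
    roots_prod_eq] at h2
  have h3 : Finset.univ.val.map hΓ.eigenvalues =
      Finset.univ.val.map hX.eigenvalues + Finset.univ.val.map hBH.eigenvalues := by
    apply Multiset.map_injective Complex.ofReal_injective
    simpa [Multiset.map_map, Function.comp, Function.comp_def] using h2
  rw [h3, Multiset.filter_add]
  have h4 : Multiset.filter (fun t => t < 0) (Finset.univ.val.map hBH.eigenvalues) = 0 := by
    rw [Multiset.filter_eq_nil]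
    intro t ht
    rw [Multiset.mem_map] at ht
    obtain ⟨j, -, rfl⟩ := ht
    exact not_lt.mpr (hBpsd.eigenvalues_nonneg j)
  rw [h4, add_zero]
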